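/- Let X be a real random variable with Gaussian law of mean m ∈ ℝ and variance v > 0, and for α ≥ 0 define f_α(y) = (m − y)² + v + α·g(y) with g(y) = E[(X − y)² | X > y]. If 0 ≤ α₁ < α₂ and y₁, y₂ are global minimizers of f_{α₁} and f_{α₂} respectively, then y₁ ≤ y₂; that is, a higher undersupply penalty parameter leads to a (weakly) higher optimal output. -/

import Mathlib

open MeasureTheory ProbabilityTheory Set
open scoped NNReal

namespace PenalizedAux

open Real
open scoped ENNReal

variable {m : ℝ} {v : ℝ≥0}

lemma phi_mul (m : ℝ) (v : ℝ≥0) (x z : ℝ) :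
    gaussianPDFReal m v x * gaussianPDFReal m v z
      = ((√(2 * π * v))⁻¹)^2 * rexp ((- (x - m)^2 + - (z - m)^2) / (2 * v)) := by
  simp only [gaussianPDFReal]
  rw [mul_mul_mul_comm, ← Real.exp_add, ← sq, ← add_div]

/-- The two-point monotone likelihood ratio property of shifted Gaussian densities. -/
lemma prod_lt (hv : v ≠ 0) {y y' s t : ℝ} (hy : y < y') (hst : t < s) :
    gaussianPDFReal m v (y + t) * gaussianPDFReal m v (y' + s)
      < gaussianPDFReal m v (y + s) * gaussianPDFReal m v (y' + t) := by
  have hvpos : (0:ℝ) < v := NNReal.coe_pos.mpr (pos_iff_ne_zero.mpr hv)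
  have hs : (0:ℝ) < √(2 * π * v) := Real.sqrt_pos.mpr (by positivity)
  have hc : (0:ℝ) < ((√(2 * π * v))⁻¹)^2 := by positivity
  rw [phi_mul, phi_mul]
  refine mul_lt_mul_of_pos_left (Real.exp_lt_exp.mpr ?_) hc
  rw [div_lt_div_iff_of_pos_right (by positivity)]
  nlinarith [mul_pos (sub_pos.mpr hy) (sub_pos.mpr hst)]

lemma integrable_shift (m : ℝ) (v : ℝ≥0) (y : ℝ) :
    Integrable (fun t => gaussianPDFReal m v (y + t)) :=
  (integrable_gaussianPDFReal m v).comp_add_left y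

lemma integrable_sq_shift (hv : v ≠ 0) (y : ℝ) :
    Integrable (fun t : ℝ => t^2 * gaussianPDFReal m v (y + t)) := by
  have hvpos : (0:ℝ) < v := NNReal.coe_pos.mpr (pos_iff_ne_zero.mpr hv)
  set b : ℝ := (2 * (v:ℝ))⁻¹ with hb
  have hbpos : 0 < b := by positivity
  set d : ℝ := m - y with hd
  have e0 : Integrable (fun u : ℝ => rexp (-b * u^2)) := integrable_exp_neg_mul_sq hbpos
  have e1 : Integrable (fun u : ℝ => u * rexp (-b * u^2)) := integrable_mul_exp_neg_mul_sq hbpos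
  have e2 : Integrable (fun u : ℝ => u^2 * rexp (-b * u^2)) := by
    have h := integrable_rpow_mul_exp_neg_mul_sq hbpos (s := (2:ℝ)) (by norm_num)
    have heq : (fun u : ℝ => u ^ (2:ℝ) * rexp (-b * u^2)) = fun u : ℝ => u^2 * rexp (-b * u^2) := by
      funext u
      rw [show (2:ℝ) = ((2:ℕ):ℝ) by norm_num, Real.rpow_natCast]
    rwa [heq] at h
  have h1 : Integrable (fun u : ℝ => (u + d)^2 * rexp (-b * u^2)) :=
    ((e2.add (e1.const_mul (2*d))).add (e0.const_mul (d^2))).congr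
      (Filter.Eventually.of_forall fun u => by simp only [Pi.add_apply]; ring)
  have h2 : Integrable (fun t : ℝ => t^2 * rexp (-b * (t - d)^2)) :=
    (h1.comp_sub_right d).congr
      (Filter.Eventually.of_forall fun t => by simp only [sub_add_cancel])
  have key : (fun t : ℝ => t^2 * gaussianPDFReal m v (y + t))
      = fun t => (√(2 * π * (v:ℝ)))⁻¹ * (t^2 * rexp (-b * (t - d)^2)) := by
    funext t
    simp only [gaussianPDFReal]
    rw [hb, hd, show -(y + t - m)^2 / (2*(v:ℝ)) = -(2*(v:ℝ))⁻¹ * (t - (m - y))^2 by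
      field_simp; ring]
    ring
  rw [key]
  exact h2.const_mul _

lemma den_pos (hv : v ≠ 0) (y : ℝ) :
    0 < ∫ t in Ioi (0:ℝ), gaussianPDFReal m v (y + t) := by
  rw [setIntegral_pos_iff_support_of_nonneg_ae
    (Filter.Eventually.of_forall fun t => gaussianPDFReal_nonneg m v (y + t))
    (integrable_shift m v y).integrableOn]
  have hsup : Function.support (fun t => gaussianPDFReal m v (y + t)) = univ :=
    eq_univ_of_forall fun t => (gaussianPDFReal_pos m v (y + t) hv).ne'
  rw [hsup, univ_inter, Real.volume_Ioi]
  exact ENNReal.zero_lt_top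

/-- Key comparison: the ratio of the truncated second moment to the tail mass is
strictly decreasing, via a correlation (double integral) argument. -/
lemma ratio_lt (hv : v ≠ 0) {y y' : ℝ} (hy : y < y') :
    (∫ t in Ioi (0:ℝ), t^2 * gaussianPDFReal m v (y' + t)) *
        (∫ t in Ioi (0:ℝ), gaussianPDFReal m v (y + t))
      < (∫ t in Ioi (0:ℝ), t^2 * gaussianPDFReal m v (y + t)) *
        (∫ t in Ioi (0:ℝ), gaussianPDFReal m v (y' + t)) := by
  set p : ℝ → ℝ := fun t => gaussianPDFReal m v (y + t) with hp
  set q : ℝ → ℝ := fun t => gaussianPDFReal m v (y' + t) with hq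
  set μ0 : Measure ℝ := volume.restrict (Ioi (0:ℝ)) with hμ0
  set F : ℝ × ℝ → ℝ := fun z => (z.1^2 - z.2^2) * (p z.1 * q z.2 - q z.1 * p z.2) with hF
  set f1 : ℝ × ℝ → ℝ := fun z => (z.1^2 * p z.1) * q z.2 with hf1
  set f2 : ℝ × ℝ → ℝ := fun z => (z.1^2 * q z.1) * p z.2 with hf2
  set f3 : ℝ × ℝ → ℝ := fun z => p z.1 * (z.2^2 * q z.2) with hf3
  set f4 : ℝ × ℝ → ℝ := fun z => q z.1 * (z.2^2 * p z.2) with hf4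
  have ip : Integrable p μ0 := (integrable_shift m v y).integrableOn
  have iq : Integrable q μ0 := (integrable_shift m v y').integrableOn
  have isp : Integrable (fun t => t^2 * p t) μ0 := (integrable_sq_shift hv y).integrableOn
  have isq : Integrable (fun t => t^2 * q t) μ0 := (integrable_sq_shift hv y').integrableOn
  have hFeq : F = ((f1 - f2) - f3) + f4 := by
    funext z
    simp only [hF, hf1, hf2, hf3, hf4, Pi.add_apply, Pi.sub_apply]
    ring
  have i1 : Integrable f1 (μ0.prod μ0) := isp.mul_prod iq
  have i2 : Integrable f2 (μ0.prod μ0) := isq.mul_prod ip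
  have i3 : Integrable f3 (μ0.prod μ0) := ip.mul_prod isq
  have i4 : Integrable f4 (μ0.prod μ0) := iq.mul_prod isp
  have hFint : Integrable F (μ0.prod μ0) := by
    rw [hFeq]; exact ((i1.sub i2).sub i3).add i4
  have hsign : ∀ s t : ℝ, t < s → 0 < p s * q t - q s * p t := by
    intro s t hst
    have := prod_lt (m := m) hv hy hst
    simp only [hp, hq]; linarith
  have hpos : ∀ s t : ℝ, 0 < s → 0 < t → s ≠ t → 0 < F (s, t) := by
    intro s t hs ht hne
    rcases lt_or_gt_of_ne hne with h | h
    · have h2 := hsign t s h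
      have h1 : s^2 - t^2 < 0 := by nlinarith
      simp only [hF]
      nlinarith
    · have h2 := hsign s t h
      have h1 : 0 < s^2 - t^2 := by nlinarith
      simp only [hF]
      nlinarith
  have hnonneg : ∀ s t : ℝ, 0 < s → 0 < t → 0 ≤ F (s, t) := by
    intro s t hs ht
    rcases eq_or_ne s t with rfl | hne
    · simp [hF]
    · exact (hpos s t hs ht hne).le
  have hmain : 0 < ∫ z, F z ∂(μ0.prod μ0) := by
    have hae : 0 ≤ᵐ[μ0.prod μ0] F := by
      rw [hμ0, Measure.prod_restrict]
      filter_upwards [ae_restrict_mem (measurableSet_Ioi.prod measurableSet_Ioi)] with z hz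
      exact hnonneg z.1 z.2 hz.1 hz.2
    rw [integral_pos_iff_support_of_nonneg_ae hae hFint]
    have hsub : (Ioo (0:ℝ) 1) ×ˢ (Ioo (1:ℝ) 2) ⊆ Function.support F := by
      rintro ⟨s, t⟩ ⟨hs, ht⟩
      exact (hpos s t hs.1 (lt_trans one_pos ht.1) (ne_of_lt (lt_trans hs.2 ht.1))).ne'
    refine lt_of_lt_of_le ?_ (measure_mono hsub)
    rw [Measure.prod_prod, hμ0, Measure.restrict_apply measurableSet_Ioo,
      Measure.restrict_apply measurableSet_Ioo]
    have e1 : Ioo (0:ℝ) 1 ∩ Ioi 0 = Ioo 0 1 := inter_eq_left.mpr Ioo_subset_Ioi_self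
    have e2 : Ioo (1:ℝ) 2 ∩ Ioi 0 = Ioo 1 2 :=
      inter_eq_left.mpr (fun x hx => lt_trans one_pos hx.1)
    rw [e1, e2, Real.volume_Ioo, Real.volume_Ioo]
    norm_num
  have hval : ∫ z, F z ∂(μ0.prod μ0)
      = (∫ t in Ioi (0:ℝ), t^2 * p t) * (∫ t in Ioi (0:ℝ), q t)
        - (∫ t in Ioi (0:ℝ), t^2 * q t) * (∫ t in Ioi (0:ℝ), p t)
        - (∫ t in Ioi (0:ℝ), p t) * (∫ t in Ioi (0:ℝ), t^2 * q t)
        + (∫ t in Ioi (0:ℝ), q t) * (∫ t in Ioi (0:ℝ), t^2 * p t) := by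
    rw [hFeq, integral_add' ((i1.sub i2).sub i3) i4, integral_sub' (i1.sub i2) i3,
      integral_sub' i1 i2, hf1, hf2, hf3, hf4]
    beta_reduce
    have e1 : (∫ (a : ℝ × ℝ), a.1^2 * p a.1 * q a.2 ∂(μ0.prod μ0))
        = (∫ t in Ioi (0:ℝ), t^2 * p t) * ∫ t in Ioi (0:ℝ), q t :=
      integral_prod_mul (fun t => t^2 * p t) q
    have e2 : (∫ (a : ℝ × ℝ), a.1^2 * q a.1 * p a.2 ∂(μ0.prod μ0))
        = (∫ t in Ioi (0:ℝ), t^2 * q t) * ∫ t in Ioi (0:ℝ), p t :=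
      integral_prod_mul (fun t => t^2 * q t) p
    have e3 : (∫ (a : ℝ × ℝ), p a.1 * (a.2^2 * q a.2) ∂(μ0.prod μ0))
        = (∫ t in Ioi (0:ℝ), p t) * ∫ t in Ioi (0:ℝ), t^2 * q t :=
      integral_prod_mul p (fun t => t^2 * q t)
    have e4 : (∫ (a : ℝ × ℝ), q a.1 * (a.2^2 * p a.2) ∂(μ0.prod μ0))
        = (∫ t in Ioi (0:ℝ), q t) * ∫ t in Ioi (0:ℝ), t^2 * p t :=
      integral_prod_mul q (fun t => t^2 * p t)
    rw [e1, e2, e3, e4]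
  rw [hval] at hmain
  simp only [hp, hq] at hmain ⊢
  nlinarith [hmain]

lemma shift_integral (f : ℝ → ℝ) (y : ℝ) :
    ∫ x in Ioi y, f x = ∫ t in Ioi (0:ℝ), f (t + y) := by
  have ht := (measurePreserving_add_right volume y).setIntegral_preimage_emb
    (measurableEmbedding_addRight y) f (Ioi y)
  have hpre : (· + y) ⁻¹' (Ioi y) = Ioi (0:ℝ) := by
    ext t; simp
  rw [hpre] at ht
  exact ht.symm

lemma den_eq (hv : v ≠ 0) {Ω : Type*} [MeasureSpace Ω] (P : Measure Ω)
    (X : Ω → ℝ) (hX : Measurable X)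
    (hlaw : Measure.map X P = gaussianReal m v) (y : ℝ) :
    (P {ω | y < X ω}).toReal = ∫ t in Ioi (0:ℝ), gaussianPDFReal m v (y + t) := by
  have h1 : P {ω | y < X ω} = Measure.map X P (Ioi y) :=
    (Measure.map_apply hX measurableSet_Ioi).symm
  rw [h1, hlaw, gaussianReal_apply_eq_integral m hv,
    ENNReal.toReal_ofReal (setIntegral_nonneg measurableSet_Ioi
      fun x _ => gaussianPDFReal_nonneg m v x),
    shift_integral (gaussianPDFReal m v) y]
  simp only [add_comm]

lemma num_eq (hv : v ≠ 0) {Ω : Type*} [MeasureSpace Ω] (P : Measure Ω)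
    (X : Ω → ℝ) (hX : Measurable X)
    (hlaw : Measure.map X P = gaussianReal m v) (y : ℝ) :
    ∫ ω in {ω | y < X ω}, (X ω - y)^2 ∂P
      = ∫ t in Ioi (0:ℝ), t^2 * gaussianPDFReal m v (y + t) := by
  have hmeas : AEStronglyMeasurable (fun x : ℝ => (x - y)^2) (Measure.map X P) :=
    ((continuous_id.sub continuous_const).pow 2).aestronglyMeasurable
  have h1 : ∫ ω in {ω | y < X ω}, (X ω - y)^2 ∂P
      = ∫ x in Ioi y, (x - y)^2 ∂(Measure.map X P) :=
    (setIntegral_map measurableSet_Ioi hmeas hX.aemeasurable).symm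
  rw [h1, hlaw, gaussianReal_of_var_ne_zero m hv]
  have hwd : (volume : Measure ℝ).withDensity (gaussianPDF m v)
      = volume.withDensity (fun x => ((gaussianPDFReal m v x).toNNReal : ℝ≥0∞)) := by congr 1
  rw [hwd, setIntegral_withDensity_eq_setIntegral_smul
    (measurable_gaussianPDFReal m v).real_toNNReal _ measurableSet_Ioi]
  have hsmul : ∀ x : ℝ, (gaussianPDFReal m v x).toNNReal • (x - y)^2
      = gaussianPDFReal m v x * (x - y)^2 := by
    intro x
    rw [NNReal.smul_def, Real.coe_toNNReal _ (gaussianPDFReal_nonneg m v x), smul_eq_mul]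
  simp only [hsmul]
  rw [shift_integral (fun x => gaussianPDFReal m v x * (x - y)^2) y]
  have : ∀ t : ℝ, gaussianPDFReal m v (t + y) * ((t + y) - y)^2
      = t^2 * gaussianPDFReal m v (y + t) := by
    intro t
    rw [add_sub_cancel_right, add_comm y t]; ring
  simp only [this]

end PenalizedAux

/-- Comparative statics in the penalty parameter: for a Gaussian random variable
`X` with mean `m` and variance `v > 0`, if `0 ≤ α₁ < α₂` and `y₁`, `y₂` are
global minimizers of `f_{α₁}` and `f_{α₂}` respectively, where
`f_α(y) = (m − y)² + v + α·g(y)` and `g(y) = E[(X − y)² | X > y]`,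
then `y₁ ≤ y₂`. -/
theorem penalized_objective_minimizer_monotone {Ω : Type*} [MeasureSpace Ω]
    (P : Measure Ω) [IsProbabilityMeasure P]
    (X : Ω → ℝ) (hX : Measurable X) (m : ℝ) (v : ℝ≥0) (hv : 0 < v)
    (hlaw : Measure.map X P = gaussianReal m v)
    (g : ℝ → ℝ)
    (hg : ∀ y, g y =
      (∫ ω in {ω | y < X ω}, (X ω - y) ^ 2 ∂P) / (P {ω | y < X ω}).toReal)
    (f : ℝ → ℝ → ℝ)
    (hf : ∀ α y, f α y = (m - y) ^ 2 + v + α * g y)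
    (α₁ α₂ : ℝ) (hα₁ : 0 ≤ α₁) (hα : α₁ < α₂)
    (y₁ y₂ : ℝ)
    (hy₁ : ∀ y : ℝ, f α₁ y₁ ≤ f α₁ y)
    (hy₂ : ∀ y : ℝ, f α₂ y₂ ≤ f α₂ y) :
    y₁ ≤ y₂ := by
  by_contra hcon
  push_neg at hcon
  have hv' : v ≠ 0 := hv.ne'
  have gkey : ∀ y : ℝ, g y
      = (∫ t in Ioi (0:ℝ), t^2 * gaussianPDFReal m v (y + t))
        / (∫ t in Ioi (0:ℝ), gaussianPDFReal m v (y + t)) := by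
    intro y
    rw [hg y, PenalizedAux.num_eq hv' P X hX hlaw y, PenalizedAux.den_eq hv' P X hX hlaw y]
  have d1 := PenalizedAux.den_pos (m := m) hv' y₁
  have d2 := PenalizedAux.den_pos (m := m) hv' y₂
  have hr := PenalizedAux.ratio_lt (m := m) hv' hcon
  have hglt : g y₁ < g y₂ := by
    rw [gkey y₁, gkey y₂, div_lt_div_iff₀ d1 d2]
    exact hr
  have h1 := hy₁ y₂
  have h2 := hy₂ y₁
  rw [hf α₁ y₁, hf α₁ y₂] at h1
  rw [hf α₂ y₂, hf α₂ y₁] at h2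
  nlinarith [mul_pos (sub_pos.mpr hα) (sub_pos.mpr hglt)]
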